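/- If R has Bishop's property (β) at λ₀ and S ∈ Helton_k(R) (i.e. C(R,S)^k(I) = 0 for some k ≥ 1), then S has Bishop's property (β) at λ₀. -/

import Mathlib

open Filter Metric Polynomial

noncomputable section

variable {X : Type*} [NormedAddCommGroup X] [NormedSpace ℂ X]

/-- The commutator map `C(R,S)(A) = RA - AS`. -/
def commMap (R S : X →L[ℂ] X) : (X →L[ℂ] X) → (X →L[ℂ] X) := fun A => R ∘L A - A ∘L S

/-- Bishop's property (β) at a point `l0`. -/
def BishopBetaAt (T : X →L[ℂ] X) (l0 : ℂ) : Prop :=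
  ∃ v > (0 : ℝ), ∀ U : Set ℂ, IsOpen U → U ⊆ ball l0 v →
    ∀ f : ℕ → ℂ → X, (∀ n, AnalyticOnNhd ℂ (f n) U) →
      (∀ K ⊆ U, IsCompact K →
        TendstoUniformlyOn (fun n z => T (f n z) - z • f n z) 0 atTop K) →
      ∀ K ⊆ U, IsCompact K → TendstoUniformlyOn (fun n z => f n z) 0 atTop K

lemma iter_comm_eq {B : Type*} [Ring B] (x y : B) (k : ℕ) :
    (fun A : B => x * A - A * y)^[k] 1 =
      ∑ m ∈ Finset.range (k+1), (((-1:ℤ)^(k-m) * (k.choose m)) • (x^m * y^(k-m)) : B) := by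
  have hfun : (fun A : B => x * A - A * y)
      = ⇑(LinearMap.mulLeft ℤ x - LinearMap.mulRight ℤ y) := by
    ext A; simp
  have hc : Commute (LinearMap.mulLeft ℤ x) (-(LinearMap.mulRight ℤ y)) :=
    (LinearMap.commute_mulLeft_right x y).neg_right
  rw [hfun, ← Module.End.pow_apply, sub_eq_add_neg, hc.add_pow]
  rw [LinearMap.sum_apply]
  refine Finset.sum_congr rfl fun m _ => ?_
  have hneg : (-(LinearMap.mulRight ℤ y)) ^ (k - m)
      = ((-1:ℤ)^(k-m)) • (LinearMap.mulRight ℤ y) ^ (k - m) := by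
    rw [← _root_.smul_pow, neg_one_zsmul]
  rw [Module.End.mul_apply, Module.End.mul_apply, hneg]
  simp only [LinearMap.smul_apply, LinearMap.pow_mulLeft, LinearMap.pow_mulRight,
    LinearMap.mulLeft_apply, LinearMap.mulRight_apply, Module.End.natCast_apply,
    smul_mul_assoc, one_mul, mul_smul_comm, mul_smul, natCast_zsmul]

lemma tuo_zero {K : Set ℂ} : TendstoUniformlyOn (fun (_ : ℕ) (_ : ℂ) => (0:X)) 0 atTop K := by
  rw [Metric.tendstoUniformlyOn_iff]
  intro ε hε
  filter_upwards with n z _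
  simpa using hε

lemma tuo_neg {K : Set ℂ} {F : ℕ → ℂ → X} (h : TendstoUniformlyOn F 0 atTop K) :
    TendstoUniformlyOn (fun n z => -(F n z)) 0 atTop K := by
  rw [Metric.tendstoUniformlyOn_iff] at h ⊢
  intro ε hε
  filter_upwards [h ε hε] with n hn z hz
  simpa [dist_eq_norm] using hn z hz

lemma tuo_sum {ι : Type*} (s : Finset ι) (F : ι → ℕ → ℂ → X) (K : Set ℂ)
    (h : ∀ i ∈ s, TendstoUniformlyOn (F i) 0 atTop K) :
    TendstoUniformlyOn (fun n z => ∑ i ∈ s, F i n z) 0 atTop K := by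
  classical
  induction s using Finset.induction_on with
  | empty => simpa using tuo_zero
  | @insert a s ha ih =>
      have h1 := h a (Finset.mem_insert_self a s)
      have h2 := ih fun i hi => h i (Finset.mem_insert_of_mem hi)
      have := h1.add h2
      simp only [Finset.sum_insert ha]
      rw [add_zero] at this
      exact this

lemma tuo_apply_bound {K : Set ℂ} (T : ℂ → (X →L[ℂ] X)) {C : ℝ}
    (hC : ∀ z ∈ K, ‖T z‖ ≤ C) {F : ℕ → ℂ → X}
    (hF : TendstoUniformlyOn F 0 atTop K) :
    TendstoUniformlyOn (fun n z => T z (F n z)) 0 atTop K := by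
  rw [Metric.tendstoUniformlyOn_iff] at hF ⊢
  intro ε hε
  have hpos : 0 < max C 0 + 1 := by positivity
  filter_upwards [hF (ε / (max C 0 + 1)) (by positivity)] with n hn z hz
  have h1 : ‖F n z‖ < ε / (max C 0 + 1) := by simpa [dist_eq_norm] using hn z hz
  have h2 : ‖T z (F n z)‖ ≤ ‖T z‖ * ‖F n z‖ := (T z).le_opNorm _
  have h3 : ‖T z‖ ≤ max C 0 := le_trans (hC z hz) (le_max_left _ _)
  have h4 : ‖T z (F n z)‖ ≤ max C 0 * ‖F n z‖ :=
    le_trans h2 (mul_le_mul_of_nonneg_right h3 (norm_nonneg _))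
  have h5 : max C 0 * ‖F n z‖ < ε := by
    have h6 : max C 0 * ‖F n z‖ ≤ max C 0 * (ε / (max C 0 + 1)) :=
      mul_le_mul_of_nonneg_left h1.le (le_max_right _ _)
    have h7 : max C 0 * (ε / (max C 0 + 1)) < (max C 0 + 1) * (ε / (max C 0 + 1)) :=
      mul_lt_mul_of_pos_right (by linarith) (by positivity)
    have h8 : (max C 0 + 1) * (ε / (max C 0 + 1)) = ε := by field_simp
    linarith
  simp only [Pi.zero_apply, dist_eq_norm, zero_sub, norm_neg]
  linarith

theorem stmt3 [CompleteSpace X] (R S : X →L[ℂ] X) (l0 : ℂ) (k : ℕ) (hk : 1 ≤ k)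
    (hHelton : (commMap R S)^[k] 1 = 0) (hR : BishopBetaAt R l0) :
    BishopBetaAt S l0 := by
  obtain ⟨v, hv, hRp⟩ := hR
  refine ⟨v, hv, ?_⟩
  intro U hU hUb f hf hS
  set Bx : ℂ → (X →L[ℂ] X) := fun z => R - z • 1 with hBx
  set By : ℂ → (X →L[ℂ] X) := fun z => S - z • 1 with hBy
  have hxw : ∀ (z : ℂ) (w : X), Bx z w = R w - z • w := by
    intro z w
    simp [hBx, ContinuousLinearMap.sub_apply, ContinuousLinearMap.smul_apply,
      ContinuousLinearMap.one_apply]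
  have hyw : ∀ (z : ℂ) (w : X), By z w = S w - z • w := by
    intro z w
    simp [hBy, ContinuousLinearMap.sub_apply, ContinuousLinearMap.smul_apply,
      ContinuousLinearMap.one_apply]
  -- shifted commutator map
  have hsh : ∀ z : ℂ, (fun A : X →L[ℂ] X => Bx z * A - A * By z) = commMap R S := by
    intro z; funext A
    simp only [hBx, hBy, commMap, sub_mul, mul_sub, smul_mul_assoc, mul_smul_comm,
      one_mul, mul_one]
    rw [ContinuousLinearMap.mul_def, ContinuousLinearMap.mul_def]
    abel
  -- key algebraic identity
  have hkey : ∀ z : ℂ, (Bx z)^k =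
      -∑ m ∈ Finset.range k,
        (((-1:ℤ)^(k-m) * (k.choose m)) • ((Bx z)^m * (By z)^(k-m))) := by
    intro z
    have h0 := iter_comm_eq (Bx z) (By z) k
    rw [hsh z, hHelton, Finset.sum_range_succ] at h0
    simp only [Nat.sub_self, pow_zero, Nat.choose_self, Nat.cast_one, mul_one,
      one_smul] at h0
    have h1 : (Bx z)^k + (∑ m ∈ Finset.range k,
        (((-1:ℤ)^(k-m) * (k.choose m)) • ((Bx z)^m * (By z)^(k-m)))) = 0 := by
      rw [add_comm]; exact h0.symm
    exact eq_neg_of_add_eq_zero_left h1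
  -- differentiability of z ↦ (Bx z)^j
  have hBxdiff : Differentiable ℂ Bx := by
    simpa [hBx] using (differentiable_const R).sub
      ((differentiable_id (𝕜 := ℂ)).smul_const (1 : X →L[ℂ] X))
  have hdiffpow : ∀ j : ℕ, Differentiable ℂ (fun z : ℂ => (Bx z)^j) := by
    intro j
    induction j with
    | zero => simpa using differentiable_const (1 : X →L[ℂ] X)
    | succ j ih =>
        have := ih.mul hBxdiff
        simp only [pow_succ]; exact this
  -- descent step
  have key : ∀ j : ℕ,
      (∀ K ⊆ U, IsCompact K →
        TendstoUniformlyOn (fun n z => ((Bx z)^(j+1)) (f n z)) 0 atTop K) →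
      (∀ K ⊆ U, IsCompact K →
        TendstoUniformlyOn (fun n z => ((Bx z)^j) (f n z)) 0 atTop K) := by
    intro j hj
    refine hRp U hU hUb (fun n z => ((Bx z)^j) (f n z)) ?_ ?_
    · intro n
      refine DifferentiableOn.analyticOnNhd ?_ hU
      intro z hz
      have h1 : DifferentiableAt ℂ (fun z : ℂ => (Bx z)^j) z := (hdiffpow j) z
      have h2 : DifferentiableAt ℂ (f n) z := ((hf n) z hz).differentiableAt
      exact (h1.clm_apply h2).differentiableWithinAt
    · intro K hKU hK
      have heq : ∀ (n : ℕ) (z : ℂ),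
          R (((Bx z)^j) (f n z)) - z • ((Bx z)^j) (f n z)
            = ((Bx z)^(j+1)) (f n z) := by
        intro n z
        rw [pow_succ', ContinuousLinearMap.mul_apply, hxw]
      have := hj K hKU hK
      simpa only [heq] using this
  -- base case
  have base : ∀ K ⊆ U, IsCompact K →
      TendstoUniformlyOn (fun n z => ((Bx z)^k) (f n z)) 0 atTop K := by
    intro K hKU hK
    have hsimp : (fun (n : ℕ) (z : ℂ) => ((Bx z)^k) (f n z))
        = fun n z => -(∑ m ∈ Finset.range k,
            ((((-1:ℤ)^(k-m) * (k.choose m)) • ((Bx z)^m * (By z)^(k-m-1)))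
              ((By z) (f n z)))) := by
      funext n z
      rw [hkey z]
      rw [ContinuousLinearMap.neg_apply, ContinuousLinearMap.sum_apply]
      congr 1
      refine Finset.sum_congr rfl fun m hm => ?_
      have hlt : m < k := Finset.mem_range.mp hm
      have hpow : (By z)^(k-m) = (By z)^(k-m-1) * (By z) := by
        rw [← pow_succ]; congr 1; omega
      simp [hpow, ContinuousLinearMap.smul_apply, ContinuousLinearMap.mul_apply,
        mul_assoc]
    rw [hsimp]
    refine tuo_neg ?_
    refine tuo_sum (Finset.range k)
      (fun m n z => ((((-1:ℤ)^(k-m) * (k.choose m)) • ((Bx z)^m * (By z)^(k-m-1)))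
        ((By z) (f n z)))) K (fun m _ => ?_)
    -- bound the operator on K
    have hTcont : Continuous (fun z : ℂ =>
        (((-1:ℤ)^(k-m) * (k.choose m)) • ((Bx z)^m * (By z)^(k-m-1)))) := by
      have hBycont : Continuous By := by
        exact (continuous_const.sub
          (((continuous_id : Continuous fun z : ℂ => z).smul continuous_const)))
      have h1 : Continuous (fun z : ℂ => (Bx z)^m) := (hBxdiff.continuous).pow m
      have h2 : Continuous (fun z : ℂ => (By z)^(k-m-1)) := hBycont.pow _
      exact (h1.mul h2).const_smul _
    obtain ⟨C, hC⟩ := hK.exists_bound_of_continuousOn hTcont.continuousOn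
    refine tuo_apply_bound _ hC ?_
    have := hS K hKU hK
    have heq : ∀ (n : ℕ) (z : ℂ), S (f n z) - z • f n z = (By z) (f n z) := by
      intro n z; rw [hyw]
    simpa only [heq] using this
  -- downward induction
  have main : ∀ m, m ≤ k → ∀ K ⊆ U, IsCompact K →
      TendstoUniformlyOn (fun n z => ((Bx z)^(k-m)) (f n z)) 0 atTop K := by
    intro m
    induction m with
    | zero => intro _; simpa using base
    | succ m ih =>
        intro hm
        refine key (k - (m+1)) ?_
        have h1 := ih (by omega)
        rw [show k - (m+1) + 1 = k - m from by omega]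
        exact h1
  intro K hKU hK
  have := main k le_rfl K hKU hK
  simpa using this
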